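/- Let V ∈ ℝ^{n×r} with VᵀV = I_r, let Q ∈ ℝ^{r×r} be a symmetric idempotent matrix (Q = Qᵀ and Q² = Q), and set W := VQ. Let à ∈ ℝ^{m×n} satisfy ÃW = 0, and let j ∈ {1,…,n} be an index with w := W(j,:) ≠ 0. Define Π̃ := I_n − e_j (w Wᵀ)/‖w‖₂². Then ‖Ã Π̃‖_F² = ‖Ã‖_F² + ‖Ã(:,j)‖₂² / ‖w‖₂², where Ã(:,j) denotes the j-th column of Ã. -/

import Mathlib

open Matrix BigOperators

/-- One step of the ARP recursion: project out the `i`-th row of `W`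
(convention: leave `W` unchanged if that row is zero). -/
noncomputable def arpStep {n r : ℕ} (W : Matrix (Fin n) (Fin r) ℝ) (i : Fin n) :
    Matrix (Fin n) (Fin r) ℝ :=
  if W i = 0 then W
  else W * (1 - (∑ l, (W i l) ^ 2)⁻¹ • Matrix.of fun a b => W i a * W i b)

/-- The ARP iterates `V_k`. -/
noncomputable def arpIter {n r : ℕ} (V : Matrix (Fin n) (Fin r) ℝ) (j : Fin r → Fin n) :
    ℕ → Matrix (Fin n) (Fin r) ℝ
  | 0 => V
  | k + 1 => if h : k < r then arpStep (arpIter V j k) (j ⟨k, h⟩) else arpIter V j k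

/-- The ARP weight `w(j) = ∏_{k=1}^r ‖v_k‖²/(r-k+1)`. -/
noncomputable def arpWeight {n r : ℕ} (V : Matrix (Fin n) (Fin r) ℝ) (j : Fin r → Fin n) : ℝ :=
  ∏ k : Fin r, (∑ l, (arpIter V j k.val (j k) l) ^ 2) / ((r : ℝ) - (k.val : ℝ))

/-- The matrix `E_J` whose `k`-th column is the `j_k`-th standard basis vector of ℝⁿ. -/
def EJ {n k : ℕ} (j : Fin k → Fin n) : Matrix (Fin n) (Fin k) ℝ :=
  Matrix.of fun i l => if i = j l then 1 else 0

/-- Squared Frobenius norm. -/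
def frobSq {m n : ℕ} (A : Matrix (Fin m) (Fin n) ℝ) : ℝ := ∑ i, ∑ j, (A i j) ^ 2

/-- one-step Pythagoras identity: if `ÃW = 0` with `W = VQ`
(`V` orthonormal columns, `Q` symmetric idempotent) and `w = W(j,:) ≠ 0`, then
`‖Ã Π̃‖_F² = ‖Ã‖_F² + ‖Ã(:,j)‖₂²/‖w‖₂²`. -/
theorem one_step_pythagoras {m n r : ℕ}
    (V : Matrix (Fin n) (Fin r) ℝ) (hV : Vᵀ * V = 1)
    (Q : Matrix (Fin r) (Fin r) ℝ) (hQsym : Qᵀ = Q) (hQidem : Q * Q = Q)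
    (W : Matrix (Fin n) (Fin r) ℝ) (hW : W = V * Q)
    (Atil : Matrix (Fin m) (Fin n) ℝ) (hAW : Atil * W = 0)
    (j : Fin n) (hw : W j ≠ 0) :
    frobSq (Atil *
        ((1 : Matrix (Fin n) (Fin n) ℝ) -
          (∑ l, (W j l) ^ 2)⁻¹ •
            Matrix.of (fun a b => (if a = j then (1 : ℝ) else 0) * ∑ l, W j l * W b l))) =
      frobSq Atil + (∑ i, (Atil i j) ^ 2) / (∑ l, (W j l) ^ 2) := by
  classical
  set S := ∑ l, (W j l) ^ 2 with hS
  have hSpos : 0 < S := by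
    obtain ⟨l, hl⟩ : ∃ l, W j l ≠ 0 := by
      by_contra h; push_neg at h; exact hw (funext h)
    exact Finset.sum_pos' (fun i _ => sq_nonneg _)
      ⟨l, Finset.mem_univ l, by positivity⟩
  have hSne : S ≠ 0 := ne_of_gt hSpos
  set s : Fin n → ℝ := fun b => ∑ l, W j l * W b l with hs
  -- orthogonality of rows of Atil with s
  have h1 : ∀ i, ∑ b, Atil i b * s b = 0 := by
    intro i
    have hrw : ∀ b, Atil i b * s b = ∑ l, W j l * (Atil i b * W b l) := by
      intro b; rw [hs]; simp only []; rw [Finset.mul_sum]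
      exact Finset.sum_congr rfl (fun l _ => by ring)
    simp_rw [hrw]
    rw [Finset.sum_comm]
    have h0 : ∀ l, ∑ b, W j l * (Atil i b * W b l) = 0 := by
      intro l
      rw [← Finset.mul_sum]
      have : (Atil * W) i l = 0 := by rw [hAW]; simp
      rw [Matrix.mul_apply] at this
      rw [this, mul_zero]
    simp_rw [h0]; simp
  -- norm identity : ∑ b, s b ^ 2 = S
  have hWtW : Wᵀ * W = Q := by
    rw [hW, Matrix.transpose_mul, Matrix.mul_assoc, ← Matrix.mul_assoc Vᵀ, hV,
      Matrix.one_mul, hQsym, hQidem]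
  have hWWW : W * Wᵀ * W = W := by
    rw [Matrix.mul_assoc, hWtW, hW, Matrix.mul_assoc, hQidem]
  have hM : ∀ a b, (W * Wᵀ) a b = ∑ l, W a l * W b l := by
    intro a b; simp [Matrix.mul_apply]
  have h2 : ∑ b, (s b) ^ 2 = S := by
    have key : ((W * Wᵀ) * (W * Wᵀ)) j j = (W * Wᵀ) j j := by
      rw [← Matrix.mul_assoc, hWWW]
    rw [Matrix.mul_apply] at key
    have e1 : ∑ b, (s b) ^ 2 = ∑ b, (W * Wᵀ) j b * (W * Wᵀ) b j := by
      apply Finset.sum_congr rfl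
      intro b _
      rw [hM, hM, pow_two, hs]
      simp only []
      congr 1
      exact Finset.sum_congr rfl (fun l _ => by ring)
    rw [e1, key, hM]
    exact Finset.sum_congr rfl (fun l _ => by ring)
  -- entrywise formula for the product
  have hentry : ∀ i b,
      (Atil * ((1 : Matrix (Fin n) (Fin n) ℝ) - S⁻¹ •
        Matrix.of (fun a b => (if a = j then (1 : ℝ) else 0) * ∑ l, W j l * W b l))) i b
      = Atil i b - S⁻¹ * (Atil i j * s b) := by
    intro i b
    rw [Matrix.mul_apply]
    simp only [Matrix.sub_apply, Matrix.smul_apply, Matrix.one_apply, Matrix.of_apply,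
      smul_eq_mul, mul_sub]
    rw [Finset.sum_sub_distrib]
    congr 1
    · simp [mul_comm]
    · rw [Finset.sum_eq_single j]
      · simp only [hs, if_true, eq_self_iff_true, one_mul]; ring
      · intro a _ ha; simp [ha]
      · intro h; exact absurd (Finset.mem_univ j) h
  unfold frobSq
  have hrow : ∀ i, ∑ b, (Atil i b - S⁻¹ * (Atil i j * s b)) ^ 2
      = (∑ b, (Atil i b) ^ 2) + (Atil i j) ^ 2 / S := by
    intro i
    have expand : ∀ b, (Atil i b - S⁻¹ * (Atil i j * s b)) ^ 2
        = (Atil i b) ^ 2 - (2 * S⁻¹ * Atil i j) * (Atil i b * s b)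
          + (S⁻¹ ^ 2 * (Atil i j) ^ 2) * (s b) ^ 2 := by
      intro b; ring
    simp_rw [expand]
    rw [Finset.sum_add_distrib, Finset.sum_sub_distrib, ← Finset.mul_sum, ← Finset.mul_sum,
      h1 i, h2, mul_zero, sub_zero]
    field_simp
  calc ∑ i, ∑ b, ((Atil * ((1 : Matrix (Fin n) (Fin n) ℝ) - S⁻¹ •
          Matrix.of (fun a b => (if a = j then (1 : ℝ) else 0) * ∑ l, W j l * W b l))) i b) ^ 2
      = ∑ i, ((∑ b, (Atil i b) ^ 2) + (Atil i j) ^ 2 / S) := by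
        apply Finset.sum_congr rfl
        intro i _
        rw [← hrow i]
        exact Finset.sum_congr rfl (fun b _ => by rw [hentry i b])
    _ = (∑ i, ∑ b, (Atil i b) ^ 2) + (∑ i, (Atil i j) ^ 2) / S := by
        rw [Finset.sum_add_distrib, Finset.sum_div]
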